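/- Let ℓ, m ≥ 2 be fixed integers. The set of pairs (a, b) of positive odd integers with s(a) = ℓ, s(b) = m, and s(ab) = 2 is finite. -/

import Mathlib

def s (n : ℕ) : ℕ := (Nat.digits 2 n).count 1

lemma s_rec (n : ℕ) : s n = s (n / 2) + n % 2 := by
  rcases Nat.eq_zero_or_pos n with h | h
  · simp [h, s]
  · rw [s, Nat.digits_def' (by norm_num : 1 < 2) h, List.count_cons]
    rcases Nat.mod_two_eq_zero_or_one n with h2 | h2 <;> simp [h2, s]

lemma sum_ite_testBit : ∀ N : ℕ, ∀ n < 2^N,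
    (∑ i ∈ Finset.range N, if n.testBit i then 2^i else 0) = n := by
  intro N
  induction N with
  | zero => intro n hn; interval_cases n; simp
  | succ N ih =>
    intro n hn
    rw [Finset.sum_range_succ']
    have h1 : ∀ i, (if n.testBit (i+1) then 2^(i+1) else (0:ℕ))
        = 2 * (if (n/2).testBit i then 2^i else 0) := by
      intro i
      rw [Nat.testBit_add_one]
      split <;> ring
    simp only [h1, ← Finset.mul_sum]
    have hd : n / 2 < 2^N := by
      rw [Nat.div_lt_iff_lt_mul (by norm_num)]
      calc n < 2^(N+1) := hn
        _ = 2^N * 2 := by ring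
    rw [ih (n/2) hd]
    have h0 : (if n.testBit 0 then 2^0 else 0) = n % 2 := by
      rw [Nat.testBit_zero]
      rcases Nat.mod_two_eq_zero_or_one n with h2 | h2 <;> simp [h2]
    rw [h0]
    omega

lemma card_ite_testBit : ∀ N : ℕ, ∀ n < 2^N,
    (∑ i ∈ Finset.range N, if n.testBit i then 1 else 0) = s n := by
  intro N
  induction N with
  | zero => intro n hn; interval_cases n; simp [s]
  | succ N ih =>
    intro n hn
    rw [Finset.sum_range_succ']
    have h1 : ∀ i, (if n.testBit (i+1) then 1 else (0:ℕ))
        = (if (n/2).testBit i then 1 else 0) := by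
      intro i; rw [Nat.testBit_add_one]
    simp only [h1]
    have hd : n / 2 < 2^N := by
      rw [Nat.div_lt_iff_lt_mul (by norm_num)]
      calc n < 2^(N+1) := hn
        _ = 2^N * 2 := by ring
    rw [ih (n/2) hd]
    have h0 : (if n.testBit 0 then 1 else 0) = n % 2 := by
      rw [Nat.testBit_zero]
      rcases Nat.mod_two_eq_zero_or_one n with h2 | h2 <;> simp [h2]
    rw [h0, ← s_rec]

def bits (n : ℕ) : Finset ℕ := (Finset.range n).filter (fun i => n.testBit i = true)

lemma bits_sum (n : ℕ) : ∑ i ∈ bits n, 2^i = n := by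
  rw [bits, Finset.sum_filter]
  exact sum_ite_testBit n n (Nat.lt_two_pow_self (n := n))

lemma bits_card (n : ℕ) : (bits n).card = s n := by
  rw [bits, Finset.card_filter]
  exact card_ite_testBit n n (Nat.lt_two_pow_self (n := n))

lemma zero_mem_bits (n : ℕ) (h : Odd n) : 0 ∈ bits n := by
  have h0 : 0 < n := by
    rcases h with ⟨k, hk⟩; omega
  simp [bits, Finset.mem_filter, Finset.mem_range, h0, Nat.testBit_zero,
    Nat.odd_iff.mp h]

lemma s_eq_two (x : ℕ) (hx : Odd x) (h : s x = 2) : ∃ k, 0 < k ∧ x = 2^k + 1 := by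
  have h0 : 0 ∈ bits x := zero_mem_bits x hx
  have hc : ((bits x).erase 0).card = 1 := by
    rw [Finset.card_erase_of_mem h0, bits_card, h]
  obtain ⟨k, hk⟩ := Finset.card_eq_one.mp hc
  have hk0 : k ≠ 0 := by
    have : k ∈ (bits x).erase 0 := by rw [hk]; exact Finset.mem_singleton_self k
    exact (Finset.mem_erase.mp this).1
  refine ⟨k, Nat.pos_of_ne_zero hk0, ?_⟩
  have hb : bits x = insert 0 {k} := by
    rw [← hk, Finset.insert_erase h0]
  have := bits_sum x
  rw [hb, Finset.sum_insert (by simp [Ne.symm hk0]), Finset.sum_singleton] at this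
  omega


lemma main_bound (a b n : ℕ) (ha : Odd a) (hb : Odd b) (hsa : 2 ≤ s a) (hsb : 2 ≤ s b)
    (hab : a * b = 2^n + 1) : n ≤ 2 * (s a * s b)^2 := by
  set A := bits a with hA
  set B := bits b with hB
  set K := s a * s b with hK
  have hKA : A.card = s a := bits_card a
  have hKB : B.card = s b := bits_card b
  have hK4 : 4 ≤ K := by calc 4 = 2*2 := rfl
                              _ ≤ K := Nat.mul_le_mul hsa hsb
  have h0A : 0 ∈ A := zero_mem_bits a ha
  have h0B : 0 ∈ B := zero_mem_bits b hb
  -- product as sum over pairs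
  have hPsum : ∑ p ∈ A ×ˢ B, 2^(p.1+p.2) = 2^n + 1 := by
    rw [Finset.sum_product]
    simp only [pow_add]
    rw [← Finset.sum_mul_sum]
    rw [bits_sum a, bits_sum b, hab]
  have h00 : ((0,0) : ℕ × ℕ) ∈ A ×ˢ B := Finset.mem_product.mpr ⟨h0A, h0B⟩
  set P := (A ×ˢ B).erase (0,0) with hPdef
  have hP : ∑ p ∈ P, 2^(p.1+p.2) = 2^n := by
    have h : 2^((0:ℕ)+(0:ℕ)) + ∑ p ∈ P, 2^(p.1+p.2) = ∑ p ∈ A ×ˢ B, 2^(p.1+p.2) :=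
      Finset.add_sum_erase (A ×ˢ B) (fun p => 2^(p.1+p.2)) h00
    rw [hPsum] at h
    norm_num at h
    omega
  have hPcard : P.card = K - 1 := by
    rw [hPdef, Finset.card_erase_of_mem h00, Finset.card_product, hKA, hKB]
  set E := P.image (fun p => p.1 + p.2) with hEdef
  have hEcard : E.card ≤ K - 1 := le_trans (Finset.card_image_le) (le_of_eq hPcard)
  -- climbing lemma
  have climb : ∀ x ∈ E, x + K + 1 ≤ n → ∃ y ∈ E, x < y ∧ y ≤ x + K := by
    intro x hx hxn
    by_contra hcon
    push_neg at hcon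
    set P₁ := P.filter (fun p => p.1 + p.2 ≤ x) with hP₁
    set P₂ := P.filter (fun p => ¬ p.1 + p.2 ≤ x) with hP₂
    have hsplit : (∑ p ∈ P₁, 2^(p.1+p.2)) + ∑ p ∈ P₂, 2^(p.1+p.2) = 2^n := by
      rw [Finset.sum_filter_add_sum_filter_not]; exact hP
    obtain ⟨p0, hp0P, hp0x⟩ := Finset.mem_image.mp hx
    have hpos : 0 < ∑ p ∈ P₁, 2^(p.1+p.2) := by
      apply Finset.sum_pos
      · intro p _; positivity
      · exact ⟨p0, Finset.mem_filter.mpr ⟨hp0P, le_of_eq hp0x⟩⟩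
    have hlt : ∑ p ∈ P₁, 2^(p.1+p.2) < 2^(x+K) := by
      calc ∑ p ∈ P₁, 2^(p.1+p.2) ≤ ∑ _p ∈ P₁, 2^x := by
            apply Finset.sum_le_sum
            intro p hp
            exact Nat.pow_le_pow_right (by norm_num) (Finset.mem_filter.mp hp).2
        _ = P₁.card * 2^x := by rw [Finset.sum_const, smul_eq_mul]
        _ ≤ K * 2^x := by
            apply Nat.mul_le_mul_right
            calc P₁.card ≤ P.card := Finset.card_filter_le _ _
              _ ≤ K := by omega
        _ < 2^K * 2^x := by
            have hKlt : K < 2^K := Nat.lt_two_pow_self (n := K)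
            have hpx : (0:ℕ) < 2^x := Nat.pow_pos (by norm_num)
            exact Nat.mul_lt_mul_of_lt_of_le hKlt le_rfl hpx
        _ = 2^(x+K) := by rw [← pow_add, add_comm]
    have hdvd2 : 2^(x+K+1) ∣ ∑ p ∈ P₂, 2^(p.1+p.2) := by
      apply Finset.dvd_sum
      intro p hp
      obtain ⟨hpP, hpx⟩ := Finset.mem_filter.mp hp
      have hyE : p.1 + p.2 ∈ E := Finset.mem_image_of_mem _ hpP
      have := hcon _ hyE (by omega)
      exact pow_dvd_pow 2 (by omega)
    have hdvdn : 2^(x+K+1) ∣ 2^n := pow_dvd_pow 2 hxn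
    have hdvd1 : 2^(x+K+1) ∣ ∑ p ∈ P₁, 2^(p.1+p.2) := by
      have : ∑ p ∈ P₁, 2^(p.1+p.2) = 2^n - ∑ p ∈ P₂, 2^(p.1+p.2) := by omega
      rw [this]
      exact Nat.dvd_sub hdvdn hdvd2
    have hge := Nat.le_of_dvd hpos hdvd1
    have : 2^(x+K) < 2^(x+K+1) := Nat.pow_lt_pow_right (by norm_num) (by omega)
    omega
  -- iterated climbing
  have iter : ∀ c : ℕ, ∀ x ∈ E, (E.filter (fun y => x < y)).card ≤ c → n ≤ x + K * (c+1) := by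
    intro c
    induction c with
    | zero =>
      intro x hx hc
      by_cases h : x + K + 1 ≤ n
      · obtain ⟨y, hyE, hxy, _⟩ := climb x hx h
        have : y ∈ E.filter (fun y => x < y) := Finset.mem_filter.mpr ⟨hyE, hxy⟩
        have := Finset.card_pos.mpr ⟨y, this⟩
        omega
      · omega
    | succ c ih =>
      intro x hx hc
      by_cases h : x + K + 1 ≤ n
      · obtain ⟨y, hyE, hxy, hyx⟩ := climb x hx h
        have hsub : (E.filter (fun z => y < z)).card < (E.filter (fun z => x < z)).card := by
          apply Finset.card_lt_card
          constructor
          · intro z hz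
            obtain ⟨hzE, hyz⟩ := Finset.mem_filter.mp hz
            exact Finset.mem_filter.mpr ⟨hzE, by omega⟩
          · intro hsub'
            have := hsub' (Finset.mem_filter.mpr ⟨hyE, hxy⟩)
            have := (Finset.mem_filter.mp this).2
            omega
        have hy := ih y hyE (by omega)
        have hmul : K * (c+1+1) = K * (c+1) + K := by ring
        omega
      · have : K ≤ K * (c+1+1) := Nat.le_mul_of_pos_right K (by omega)
        omega
  -- the two minimal nonzero exponents
  have getmin : ∀ (C : Finset ℕ), 0 ∈ C → 2 ≤ C.card → ∃ γ ∈ C, γ ≠ 0 ∧ 2^γ + 1 ≤ ∑ i ∈ C, 2^i := by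
    intro C h0 h2
    have hne : (C.erase 0).Nonempty := by
      rw [← Finset.card_pos, Finset.card_erase_of_mem h0]; omega
    obtain ⟨γ, hγ⟩ := hne
    obtain ⟨hγ0, hγC⟩ := Finset.mem_erase.mp hγ
    refine ⟨γ, hγC, hγ0, ?_⟩
    have hsub : ({0, γ} : Finset ℕ) ⊆ C := by
      intro z hz
      rcases Finset.mem_insert.mp hz with h | h
      · rwa [h]
      · rw [Finset.mem_singleton.mp h]; exact hγC
    calc 2^γ + 1 = ∑ i ∈ ({0, γ} : Finset ℕ), 2^i := by
          rw [Finset.sum_pair (Ne.symm hγ0)]; ring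
      _ ≤ ∑ i ∈ C, 2^i := Finset.sum_le_sum_of_subset hsub
  obtain ⟨α, hαA, hα0, hαa⟩ := getmin A h0A (by omega)
  obtain ⟨β, hβB, hβ0, hβb⟩ := getmin B h0B (by omega)
  rw [bits_sum] at hαa hβb
  -- α + β < n
  have hαβ : α + β < n := by
    have hm : (2^α + 1) * (2^β + 1) ≤ 2^n + 1 := by
      rw [← hab]; exact Nat.mul_le_mul hαa hβb
    have hexp : (2^α + 1) * (2^β + 1) = 2^(α+β) + 2^α + 2^β + 1 := by
      rw [pow_add]; ring
    have h2α : 2 ≤ 2^α := by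
      calc 2 = 2^1 := rfl
        _ ≤ 2^α := Nat.pow_le_pow_right (by norm_num) (by omega)
    have h2β : 2 ≤ 2^β := by
      calc 2 = 2^1 := rfl
        _ ≤ 2^β := Nat.pow_le_pow_right (by norm_num) (by omega)
    have : 2^(α+β) < 2^n := by omega
    exact (Nat.pow_lt_pow_iff_right (by norm_num)).mp this
  -- apply iter to α and β
  have hαE : α ∈ E := by
    apply Finset.mem_image.mpr
    refine ⟨(α, 0), ?_, by simp⟩
    apply Finset.mem_erase.mpr
    exact ⟨by simp [hα0], Finset.mem_product.mpr ⟨hαA, h0B⟩⟩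
  have hβE : β ∈ E := by
    apply Finset.mem_image.mpr
    refine ⟨(0, β), ?_, by simp⟩
    apply Finset.mem_erase.mpr
    exact ⟨by simp [hβ0], Finset.mem_product.mpr ⟨h0A, hβB⟩⟩
  have hcf : ∀ x, (E.filter (fun y => x < y)).card ≤ K - 1 :=
    fun x => le_trans (Finset.card_filter_le _ _) hEcard
  have h1 := iter (K-1) α hαE (hcf α)
  have h2 := iter (K-1) β hβE (hcf β)
  have hKK : K * (K - 1 + 1) = K * K := by
    congr 1; omega
  rw [hKK] at h1 h2
  have hsq : 2 * K^2 = K*K + K*K := by ring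
  omega

theorem finitely_many_solutions_k2 (ℓ m : ℕ) (hℓ : 2 ≤ ℓ) (hm : 2 ≤ m) :
    {p : ℕ × ℕ | 0 < p.1 ∧ 0 < p.2 ∧ Odd p.1 ∧ Odd p.2 ∧
      s p.1 = ℓ ∧ s p.2 = m ∧ s (p.1 * p.2) = 2}.Finite := by
  set N := 2^(2*(ℓ*m)^2) + 1 with hN
  apply Set.Finite.subset (Set.finite_Icc ((1,1) : ℕ × ℕ) (N, N))
  rintro ⟨x, y⟩ ⟨h1, h2, ho1, ho2, hs1, hs2, hs3⟩
  simp only [Set.mem_setOf_eq] at *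
  obtain ⟨k, hk0, hk⟩ := s_eq_two _ (ho1.mul ho2) hs3
  have hkb := main_bound x y k ho1 ho2 (by omega) (by omega) hk
  rw [hs1, hs2] at hkb
  have hx : x ≤ N := by
    calc x ≤ x * y := Nat.le_mul_of_pos_right x h2
      _ = 2^k + 1 := hk
      _ ≤ 2^(2*(ℓ*m)^2) + 1 := by
          have := Nat.pow_le_pow_right (show 1 ≤ 2 by norm_num) hkb
          omega
  have hy : y ≤ N := by
    calc y ≤ x * y := Nat.le_mul_of_pos_left y h1
      _ = 2^k + 1 := hk
      _ ≤ 2^(2*(ℓ*m)^2) + 1 := by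
          have := Nat.pow_le_pow_right (show 1 ≤ 2 by norm_num) hkb
          omega
  exact Set.mem_Icc.mpr ⟨⟨h1, h2⟩, ⟨hx, hy⟩⟩
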